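/- If the conformal lattice parameter τ is purely imaginary (rectangular lattice of unit coarea), then area(g) − sys(g)² ≥ Var(f), since in that case Im(τ) = σ² ≥ 1. -/
import Mathlib


/-- Euclidean norm on `ℝ × ℝ`. -/
noncomputable def eNorm (p : ℝ × ℝ) : ℝ := Real.sqrt (p.1 ^ 2 + p.2 ^ 2)

/-- Integral of a doubly periodic function over the fundamental domain
`{s v₁ + t v₂ : s, t ∈ [0,1]}` of the lattice `ℤv₁ + ℤv₂` (of unit coarea). -/
noncomputable def torusInt (F : ℝ × ℝ → ℝ) (v₁ v₂ : ℝ × ℝ) : ℝ :=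
  ∫ s in (0:ℝ)..1, ∫ t in (0:ℝ)..1, F (s • v₁ + t • v₂)

/-- Area of the torus with metric `f²(dx² + dy²)`. -/
noncomputable def torusArea (f : ℝ × ℝ → ℝ) (v₁ v₂ : ℝ × ℝ) : ℝ :=
  torusInt (fun p => (f p) ^ 2) v₁ v₂

/-- Mean of the conformal factor over the flat probability measure. -/
noncomputable def torusMean (f : ℝ × ℝ → ℝ) (v₁ v₂ : ℝ × ℝ) : ℝ :=
  torusInt f v₁ v₂

/-- Variance of the conformal factor over the flat probability measure. -/
noncomputable def torusVar (f : ℝ × ℝ → ℝ) (v₁ v₂ : ℝ × ℝ) : ℝ :=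
  torusInt (fun p => (f p - torusMean f v₁ v₂) ^ 2) v₁ v₂

/-- The systole of the torus `ℝ²/(ℤv₁ + ℤv₂)` with metric `f²(dx² + dy²)`:
the least `f`-length of a `C¹` loop which is noncontractible, i.e. lifts to a
path whose endpoints differ by a nonzero lattice vector. -/
noncomputable def torusSys (f : ℝ × ℝ → ℝ) (v₁ v₂ : ℝ × ℝ) : ℝ :=
  sInf {ℓ : ℝ | ∃ γ : ℝ → ℝ × ℝ, ContDiff ℝ 1 γ ∧
    (∃ m n : ℤ, γ 1 - γ 0 = m • v₁ + n • v₂ ∧ ¬(m = 0 ∧ n = 0)) ∧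
    ℓ = ∫ t in (0:ℝ)..1, f (γ t) * eNorm (deriv γ t)}

open MeasureTheory Set

/-- Fubini for continuous functions on the unit square. -/
lemma swap01 (F : ℝ × ℝ → ℝ) (hF : Continuous F) :
    (∫ a in (0:ℝ)..1, ∫ b in (0:ℝ)..1, F (a, b))
    = ∫ b in (0:ℝ)..1, ∫ a in (0:ℝ)..1, F (a, b) := by
  have h01 : (0:ℝ) ≤ 1 := zero_le_one
  have hint : Integrable (Function.uncurry fun a b => F (a, b))
      ((volume.restrict (Ioc (0:ℝ) 1)).prod (volume.restrict (Ioc (0:ℝ) 1))) := by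
    rw [Measure.prod_restrict]
    have : IntegrableOn F (Icc (0:ℝ) 1 ×ˢ Icc (0:ℝ) 1) volume :=
      hF.continuousOn.integrableOn_compact (isCompact_Icc.prod isCompact_Icc)
    exact (this.mono_set (Set.prod_mono Ioc_subset_Icc_self Ioc_subset_Icc_self)).congr
      (by filter_upwards with p; simp [Function.uncurry])
  simp_rw [intervalIntegral.integral_of_le h01]
  exact MeasureTheory.integral_integral_swap hint

/-- Rectangular lattice case: if `τ = i·s` is purely imaginary with `s ≥ 1`,
then `area(g) − sys(g)² ≥ Var(f)`. -/
theorem loewner_with_defect_rectangular (s : ℝ) (hs : 1 ≤ s)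
    (v₁ v₂ : ℝ × ℝ)
    (hv₁ : v₁ = (Real.sqrt s)⁻¹ • ((1:ℝ), (0:ℝ)))
    (hv₂ : v₂ = (Real.sqrt s)⁻¹ • ((0:ℝ), s))
    (f : ℝ × ℝ → ℝ) (hf : Continuous f) (hpos : ∀ p, 0 < f p)
    (hper₁ : ∀ p, f (p + v₁) = f p) (hper₂ : ∀ p, f (p + v₂) = f p) :
    torusArea f v₁ v₂ - (torusSys f v₁ v₂) ^ 2 ≥ torusVar f v₁ v₂ := by
  have hs0 : (0:ℝ) < s := by linarith
  have hsq : 0 < Real.sqrt s := Real.sqrt_pos.2 hs0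
  set c : ℝ := (Real.sqrt s)⁻¹ with hc_def
  have hc : 0 < c := by positivity
  have hc1 : c ≤ 1 := by
    rw [hc_def]
    rw [inv_le_one_iff₀]
    right
    exact Real.one_le_sqrt.2 hs
  -- the norm of v₁
  have hEv₁ : eNorm v₁ = c := by
    rw [hv₁]
    unfold eNorm
    simp [Prod.smul_mk, smul_eq_mul, Real.sqrt_sq hc.le]
  -- the coordinate function
  set F : ℝ × ℝ → ℝ := fun p => f (p.1 • v₁ + p.2 • v₂) with hF_def
  have hFc : Continuous F := by
    apply hf.comp
    exact (continuous_fst.smul continuous_const).add (continuous_snd.smul continuous_const)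
  set m : ℝ := torusMean f v₁ v₂ with hm_def
  -- integrability facts
  have hFint : ∀ a : ℝ, IntervalIntegrable (fun b => F (a, b)) volume 0 1 :=
    fun a => (hFc.comp (by fun_prop)).intervalIntegrable 0 1
  have hF2int : ∀ a : ℝ, IntervalIntegrable (fun b => F (a, b) ^ 2) volume 0 1 :=
    fun a => ((hFc.comp (by fun_prop)).pow 2).intervalIntegrable 0 1
  have hGcont : Continuous fun a : ℝ => ∫ b in (0:ℝ)..1, F (a, b) :=
    intervalIntegral.continuous_parametric_intervalIntegral_of_continuous'
      (f := fun a b => F (a, b)) (by fun_prop) 0 1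
  have hHcont : Continuous fun a : ℝ => ∫ b in (0:ℝ)..1, F (a, b) ^ 2 :=
    intervalIntegral.continuous_parametric_intervalIntegral_of_continuous'
      (f := fun a b => F (a, b) ^ 2) (by fun_prop) 0 1
  -- the mean as an iterated integral
  have hmean : m = ∫ a in (0:ℝ)..1, ∫ b in (0:ℝ)..1, F (a, b) := rfl
  have hm0 : 0 ≤ m := by
    rw [hmean]
    apply intervalIntegral.integral_nonneg zero_le_one
    intro a _
    exact intervalIntegral.integral_nonneg zero_le_one fun b _ => (hpos _).le
  -- variance identity : Var = Area − m²
  have hvar : torusVar f v₁ v₂ = torusArea f v₁ v₂ - m ^ 2 := by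
    have inner : ∀ a : ℝ, (∫ b in (0:ℝ)..1, (F (a, b) - m) ^ 2)
        = (∫ b in (0:ℝ)..1, F (a, b) ^ 2)
          - ((2 * m) * (∫ b in (0:ℝ)..1, F (a, b)) - m ^ 2) := by
      intro a
      have hpt : ∀ b : ℝ, (F (a, b) - m) ^ 2
          = F (a, b) ^ 2 - (2 * m * F (a, b) - m ^ 2) := by intro b; ring
      simp_rw [hpt]
      rw [intervalIntegral.integral_sub (hF2int a)
        (((hFint a).const_mul (2 * m)).sub intervalIntegrable_const),
        intervalIntegral.integral_sub ((hFint a).const_mul (2 * m)) intervalIntegrable_const,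
        intervalIntegral.integral_const_mul, intervalIntegral.integral_const]
      simp
    have : torusVar f v₁ v₂
        = (∫ a in (0:ℝ)..1, ∫ b in (0:ℝ)..1, F (a, b) ^ 2)
          - ((2 * m) * (∫ a in (0:ℝ)..1, ∫ b in (0:ℝ)..1, F (a, b)) - m ^ 2) := by
      show (∫ a in (0:ℝ)..1, ∫ b in (0:ℝ)..1, (F (a, b) - m) ^ 2) = _
      simp_rw [inner]
      rw [intervalIntegral.integral_sub (hHcont.intervalIntegrable 0 1)
        (((hGcont.intervalIntegrable 0 1).const_mul (2 * m)).sub intervalIntegrable_const),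
        intervalIntegral.integral_sub ((hGcont.intervalIntegrable 0 1).const_mul (2 * m))
          intervalIntegrable_const,
        intervalIntegral.integral_const_mul, intervalIntegral.integral_const]
      simp
    rw [this, ← hmean]
    have hA : torusArea f v₁ v₂ = ∫ a in (0:ℝ)..1, ∫ b in (0:ℝ)..1, F (a, b) ^ 2 := rfl
    rw [← hA]; ring
  -- the systole set
  set S : Set ℝ := {ℓ : ℝ | ∃ γ : ℝ → ℝ × ℝ, ContDiff ℝ 1 γ ∧
    (∃ m n : ℤ, γ 1 - γ 0 = m • v₁ + n • v₂ ∧ ¬(m = 0 ∧ n = 0)) ∧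
    ℓ = ∫ t in (0:ℝ)..1, f (γ t) * eNorm (deriv γ t)} with hS_def
  have hSys : torusSys f v₁ v₂ = sInf S := rfl
  have hnonneg_mem : ∀ ℓ ∈ S, (0:ℝ) ≤ ℓ := by
    rintro ℓ ⟨γ, hγ, _, rfl⟩
    apply intervalIntegral.integral_nonneg zero_le_one
    intro u _
    exact mul_nonneg (hpos _).le (Real.sqrt_nonneg _)
  -- horizontal loops
  have hL_mem : ∀ t : ℝ, (c * ∫ u in (0:ℝ)..1, F (u, t)) ∈ S := by
    intro t
    refine ⟨fun u : ℝ => u • v₁ + t • v₂,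
      (contDiff_id.smul contDiff_const).add contDiff_const,
      ⟨1, 0, by simp, by simp⟩, ?_⟩
    have hd : ∀ u : ℝ, deriv (fun u : ℝ => u • v₁ + t • v₂) u = v₁ := by
      intro u
      have h : HasDerivAt (fun u : ℝ => u • v₁ + t • v₂) ((1:ℝ) • v₁) u :=
        ((hasDerivAt_id u).smul_const v₁).add_const _
      simpa using h.deriv
    simp_rw [hd, hEv₁]
    rw [← intervalIntegral.integral_const_mul]
    congr 1
    ext u
    rw [mul_comm]
  have hS_ne : S.Nonempty := ⟨_, hL_mem 0⟩
  have hbdd : BddBelow S := ⟨0, fun ℓ hℓ => hnonneg_mem ℓ hℓ⟩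
  have hsys0 : 0 ≤ torusSys f v₁ v₂ := by
    rw [hSys]; exact le_csInf hS_ne hnonneg_mem
  -- the length function of horizontal loops
  set L : ℝ → ℝ := fun t => c * ∫ u in (0:ℝ)..1, F (u, t) with hL_def
  have hLcont : Continuous L := by
    apply continuous_const.mul
    exact intervalIntegral.continuous_parametric_intervalIntegral_of_continuous'
      (f := fun t u => F (u, t)) (by fun_prop) 0 1
  have hLint : (∫ t in (0:ℝ)..1, L t) = c * m := by
    rw [hL_def]
    simp only
    rw [intervalIntegral.integral_const_mul]
    congr 1
    rw [hmean, swap01 F hFc]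
  -- find a loop of length at most the average
  obtain ⟨t₀, ht₀, hmin⟩ :=
    isCompact_Icc.exists_isMinOn (⟨0, by norm_num⟩ : (Icc (0:ℝ) 1).Nonempty)
      hLcont.continuousOn
  have havg : L t₀ ≤ c * m := by
    rw [← hLint]
    calc L t₀ = ∫ _ in (0:ℝ)..1, L t₀ := by simp
    _ ≤ ∫ t in (0:ℝ)..1, L t := by
        apply intervalIntegral.integral_mono_on zero_le_one intervalIntegrable_const
          (hLcont.intervalIntegrable 0 1)
        intro x hx
        exact hmin hx
  have hsys_le : torusSys f v₁ v₂ ≤ m := by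
    have h1 : torusSys f v₁ v₂ ≤ L t₀ := by
      rw [hSys]; exact csInf_le hbdd (hL_mem t₀)
    have h2 : c * m ≤ m := by
      calc c * m ≤ 1 * m := mul_le_mul_of_nonneg_right hc1 hm0
      _ = m := one_mul m
    linarith
  have hsq_le : (torusSys f v₁ v₂) ^ 2 ≤ m ^ 2 := pow_le_pow_left₀ hsys0 hsys_le 2
  linarith [hvar]
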